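/- Let K be a field of characteristic zero, V a finite-dimensional K-vector space, and n a natural number with dim_K V ≥ n. Then the K-algebra homomorphism Φ_V : K[S_n] → End_K(V^{⊗n}) determined by σ ↦ L_σ^{(n)} is injective; equivalently, the endomorphisms {L_σ^{(n)} : σ ∈ S_n} of V^{⊗n} are linearly independent over K. -/

import Mathlib

open scoped TensorProduct

/-- The endomorphism `L_σ^{(n)}` of the `n`-th tensor power of `V`, determined by
`v_1 ⊗ ⋯ ⊗ v_n ↦ v_{σ⁻¹(1)} ⊗ ⋯ ⊗ v_{σ⁻¹(n)}`. -/
noncomputable def permMap (K : Type*) [Field K] (V : Type*) [AddCommGroup V] [Module K V]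
    (n : ℕ) (σ : Equiv.Perm (Fin n)) :
    (⨂[K] _ : Fin n, V) →ₗ[K] ⨂[K] _ : Fin n, V :=
  (PiTensorProduct.reindex K (fun _ : Fin n => V) σ).toLinearMap

/-- The endomorphism `T^{⊗n}` of the `n`-th tensor power of `V` induced by `T : V →ₗ[K] V`. -/
noncomputable def tpowMap (K : Type*) [Field K] (V : Type*) [AddCommGroup V] [Module K V]
    (n : ℕ) (T : V →ₗ[K] V) :
    (⨂[K] _ : Fin n, V) →ₗ[K] ⨂[K] _ : Fin n, V :=
  PiTensorProduct.map fun _ => T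

/-- The `K`-linear map `Φ_V : K[S_n] → End_K(V^{⊗n})` determined by `σ ↦ L_σ^{(n)}`. -/
noncomputable def PhiMap (K : Type*) [Field K] (V : Type*) [AddCommGroup V] [Module K V]
    (n : ℕ) :
    MonoidAlgebra K (Equiv.Perm (Fin n)) →ₗ[K] Module.End K (⨂[K] _ : Fin n, V) :=
  Finsupp.linearCombination K (permMap K V n) ∘ₗ
    (MonoidAlgebra.coeffLinearEquiv K).toLinearMap

/-- Dual functional on the tensor power: `v₁ ⊗ ⋯ ⊗ vₙ ↦ ∏ i, (coord of basis at h i) (v i)`. -/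
noncomputable def dualFun (K : Type*) [Field K] (V : Type*) [AddCommGroup V] [Module K V]
    (n d : ℕ) (b : Module.Basis (Fin d) K V) (h : Fin n → Fin d) :
    (⨂[K] _ : Fin n, V) →ₗ[K] K :=
  PiTensorProduct.lift
    ((MultilinearMap.mkPiAlgebra K (Fin n) K).compLinearMap (fun i => b.coord (h i)))

theorem dualFun_tprod (K : Type*) [Field K] (V : Type*) [AddCommGroup V] [Module K V]
    (n d : ℕ) (b : Module.Basis (Fin d) K V) (h g : Fin n → Fin d) :
    dualFun K V n d b h (PiTensorProduct.tprod K (fun i => b (g i)))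
      = if g = h then 1 else 0 := by
  rw [dualFun, PiTensorProduct.lift.tprod]
  simp only [MultilinearMap.compLinearMap_apply, MultilinearMap.mkPiAlgebra_apply,
    Module.Basis.coord_apply, Module.Basis.repr_self]
  by_cases hgh : g = h
  · subst hgh
    simp
  · rw [if_neg hgh]
    obtain ⟨i, hi⟩ := Function.ne_iff.mp hgh
    apply Finset.prod_eq_zero (Finset.mem_univ i)
    simp [Finsupp.single_apply, hi]

theorem key (K : Type*) [Field K] (V : Type*) [AddCommGroup V] [Module K V]
    [FiniteDimensional K V] (n : ℕ) (hn : n ≤ Module.finrank K V)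
    (f : MonoidAlgebra K (Equiv.Perm (Fin n))) (hf : PhiMap K V n f = 0) : f = 0 := by
  set d := Module.finrank K V with hd
  set b : Module.Basis (Fin d) K V := Module.finBasis K V
  set em : Fin n → Fin d := Fin.castLE hn with hem
  have hemi : Function.Injective em := Fin.castLE_injective hn
  set t : ⨂[K] _ : Fin n, V := PiTensorProduct.tprod K (fun i => b (em i)) with ht
  ext τ
  have h1 : PhiMap K V n f t = 0 := by rw [hf]; rfl
  have h2 : dualFun K V n d b (fun i => em (τ⁻¹ i)) (PhiMap K V n f t) = f.coeff τ := by
    rw [PhiMap, LinearMap.comp_apply, LinearEquiv.coe_coe, MonoidAlgebra.coeffLinearEquiv_apply]; erw [Finsupp.linearCombination_apply]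
    rw [Finsupp.sum, LinearMap.coe_sum, Finset.sum_apply, map_sum]
    have h3 : ∀ σ : Equiv.Perm (Fin n),
        dualFun K V n d b (fun i => em (τ⁻¹ i)) ((f.coeff σ • permMap K V n σ) t)
          = f.coeff σ * (if σ = τ then 1 else 0) := by
      intro σ
      rw [LinearMap.smul_apply, map_smul, smul_eq_mul]
      congr 1
      have : permMap K V n σ t = PiTensorProduct.tprod K (fun i => b (em (σ⁻¹ i))) := by
        rw [ht, permMap, LinearEquiv.coe_coe, PiTensorProduct.reindex_tprod]
        rfl
      rw [this, dualFun_tprod]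
      congr 1
      simp only [eq_iff_iff]
      constructor
      · intro hgh
        have : ∀ i, σ⁻¹ i = τ⁻¹ i := fun i => hemi (congrFun hgh i)
        have h4 : σ⁻¹ = τ⁻¹ := Equiv.ext this
        simpa using congrArg (·⁻¹) h4
      · rintro rfl; rfl
    rw [Finset.sum_congr rfl (fun σ _ => h3 σ)]
    simp only [mul_ite, mul_one, mul_zero, Finset.sum_ite_eq']
    split
    · rfl
    · next h => exact (Finsupp.notMem_support_iff.mp h).symm
  rw [h1, map_zero] at h2
  simpa using h2.symm

/-- if `dim_K V ≥ n` then `Φ_V : K[S_n] → End_K(V^{⊗n})`, `σ ↦ L_σ^{(n)}`,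
is injective; equivalently, the endomorphisms `L_σ^{(n)}` are linearly independent. -/
theorem stmt3 (K : Type*) [Field K] [CharZero K] (V : Type*) [AddCommGroup V] [Module K V]
    [FiniteDimensional K V] (n : ℕ) (hn : n ≤ Module.finrank K V) :
    Function.Injective (PhiMap K V n) ∧ LinearIndependent K (permMap K V n) := by
  constructor
  · intro a c hac
    have : PhiMap K V n (a - c) = 0 := by rw [map_sub, hac, sub_self]
    exact sub_eq_zero.mp (key K V n hn _ this)
  · rw [linearIndependent_iff]
    intro l hl
    have := key K V n hn ((MonoidAlgebra.coeffLinearEquiv K).symm l) (by simpa [PhiMap] using hl)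
    simpa using this
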